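/- Let U be a nonsingular 𝒰-matrix in standard 2×2 block form U = [[U_J, α 𝟏𝟏ᵗ], [b_K 𝟏ᵗ, U_K]] with α μ̄_J < 1 and ν_J := (U_Jᵗ)⁻¹𝟏 ≥ 0 entrywise. Then for i in the K-block and j in the J-block, (U⁻¹)_{ij} < 0 if and only if i = n (the last index) and (ν_J)_j > 0. -/

import Mathlib

open Matrix BigOperators

private lemma mul_vvm {n p q : Type*} [Fintype p] (M : Matrix n p ℝ) (u : p → ℝ) (v : q → ℝ) :
    M * vecMulVec u v = vecMulVec (M *ᵥ u) v := by
  ext i j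
  simp [Matrix.mul_apply, vecMulVec_apply, Matrix.mulVec, dotProduct, Finset.sum_mul, mul_assoc]

private lemma vvm_mul {n p q : Type*} [Fintype p] (u : n → ℝ) (v : p → ℝ) (M : Matrix p q ℝ) :
    vecMulVec u v * M = vecMulVec u (v ᵥ* M) := by
  ext i j
  simp [Matrix.mul_apply, vecMulVec_apply, Matrix.vecMul, dotProduct, Finset.mul_sum, mul_assoc]

private lemma vvm_mul_vvm {n p q : Type*} [Fintype p] (u : n → ℝ) (v w : p → ℝ) (z : q → ℝ) :
    vecMulVec u v * vecMulVec w z = (v ⬝ᵥ w) • vecMulVec u z := by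
  ext i j
  simp only [Matrix.mul_apply, vecMulVec_apply, Matrix.smul_apply, dotProduct, smul_eq_mul,
    Finset.sum_mul]
  exact Finset.sum_congr rfl fun x _ => by ring

theorem link_KJ_block (m k : ℕ)
    (UJ : Matrix (Fin m) (Fin m) ℝ) (UK : Matrix (Fin (k + 1)) (Fin (k + 1)) ℝ)
    (α : ℝ) (hJ : IsUnit UJ.det) (hK : IsUnit UK.det)
    (eK : Fin (k + 1) → ℝ) (heK : eK = Pi.single (Fin.last k) 1)
    (νJ : Fin m → ℝ) (hνJ : νJ = (UJᵀ)⁻¹ *ᵥ (fun _ => 1))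
    (hνJnonneg : ∀ j, 0 ≤ νJ j)
    (hα : α * (∑ i, (UJ⁻¹ *ᵥ (fun _ => (1:ℝ))) i) < 1)
    (U : Matrix (Fin m ⊕ Fin (k + 1)) (Fin m ⊕ Fin (k + 1)) ℝ)
    (hU : U = fromBlocks UJ (α • vecMulVec (fun _ => 1) (fun _ => 1))
      (vecMulVec (UK *ᵥ eK) (fun _ => 1)) UK) :
    ∀ (i : Fin (k + 1)) (j : Fin m),
      U⁻¹ (Sum.inr i) (Sum.inl j) < 0 ↔ i = Fin.last k ∧ 0 < νJ j := by
  have hJr : UJ * UJ⁻¹ = 1 := Matrix.mul_nonsing_inv UJ hJ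
  have hJl : UJ⁻¹ * UJ = 1 := Matrix.nonsing_inv_mul UJ hJ
  have hKr : UK * UK⁻¹ = 1 := Matrix.mul_nonsing_inv UK hK
  set μ : Fin m → ℝ := UJ⁻¹ *ᵥ (fun _ => 1) with hμ
  set c : ℝ := α * ∑ i, μ i with hc
  have hd : (0:ℝ) < 1 - c := sub_pos.mpr hα
  have hdne : (1 - c) ≠ 0 := ne_of_gt hd
  have hνrow : νJ = (fun _ => (1:ℝ)) ᵥ* UJ⁻¹ := by
    rw [hνJ, ← Matrix.transpose_nonsing_inv]
    ext j
    simp [Matrix.mulVec, Matrix.vecMul, dotProduct, Matrix.transpose_apply, mul_comm]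
  set r : Fin (k+1) → ℝ := (fun _ => (1:ℝ)) ᵥ* UK⁻¹ with hr
  have hUJμ : UJ *ᵥ μ = (fun _ => (1:ℝ)) := by
    rw [hμ, Matrix.mulVec_mulVec, hJr, Matrix.one_mulVec]
  have h1dotμ : (fun _ => (1:ℝ)) ⬝ᵥ μ = ∑ i, μ i := by simp [dotProduct]
  have h1doteK : (fun _ => (1:ℝ)) ⬝ᵥ eK = 1 := by simp [heK, dotProduct]
  set V : Matrix (Fin m ⊕ Fin (k + 1)) (Fin m ⊕ Fin (k + 1)) ℝ :=
    fromBlocks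
      (UJ⁻¹ + (α / (1 - c)) • vecMulVec μ νJ)
      (-(α / (1 - c)) • vecMulVec μ r)
      (-(1 / (1 - c)) • vecMulVec eK νJ)
      (UK⁻¹ + (c / (1 - c)) • vecMulVec eK r) with hV
  have hUV : U * V = 1 := by
    rw [hU, hV, Matrix.fromBlocks_multiply, ← Matrix.fromBlocks_one]
    rw [Matrix.fromBlocks_inj]
    refine ⟨?_, ?_, ?_, ?_⟩
    · -- block (1,1)
      rw [Matrix.mul_add, Matrix.mul_smul, mul_vvm, hUJμ, hJr,
        Matrix.smul_mul, Matrix.mul_smul, vvm_mul_vvm, h1doteK, one_smul]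
      match_scalars <;> (field_simp; try ring)
    · -- block (1,2)
      rw [Matrix.mul_smul, mul_vvm, hUJμ, Matrix.smul_mul, Matrix.mul_add,
        vvm_mul, ← hr, Matrix.mul_smul, vvm_mul_vvm, h1doteK, one_smul]
      match_scalars <;> (field_simp; try ring)
    · -- block (2,1)
      rw [Matrix.mul_add, Matrix.mul_smul, vvm_mul, ← hνrow, vvm_mul_vvm, h1dotμ,
        Matrix.mul_smul, mul_vvm]
      match_scalars <;> (field_simp; try ring)
    · -- block (2,2)
      rw [Matrix.mul_smul, vvm_mul_vvm, h1dotμ, Matrix.mul_add, hKr,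
        Matrix.mul_smul, mul_vvm]
      match_scalars <;> (field_simp; try ring)
  have hUinv : U⁻¹ = V := Matrix.inv_eq_right_inv hUV
  intro i j
  rw [hUinv, hV]
  simp only [Matrix.fromBlocks_apply₂₁, Matrix.smul_apply, vecMulVec_apply, smul_eq_mul]
  constructor
  · intro h
    by_cases hi : i = Fin.last k
    · refine ⟨hi, ?_⟩
      rcases lt_or_eq_of_le (hνJnonneg j) with h' | h'
      · exact h'
      · exfalso; rw [← h'] at h; simp at h
    · exfalso
      have : eK i = 0 := by simp [heK, Pi.single_apply, hi]
      rw [this] at h; simp at h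
  · rintro ⟨hi, hj⟩
    have hEK : eK i = 1 := by simp [heK, hi]
    rw [hEK]
    have hpos : 0 < 1 / (1 - c) := by positivity
    nlinarith
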